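/- Chamber covering: For every W in the closed Arrow–Debreu wealth simplex W̄ there exists an admissible chamber Γ such that W lies in the closure cl(F_Γ) of F_Γ in W̄; equivalently, W̄ is the union over all admissible chambers Γ of the sets cl(F_Γ). -/

import Mathlib

open Finset Filter Topology
open scoped Classical

noncomputable section

/-- The closed Arrow–Debreu wealth simplex `{W ∈ [0,∞)^m : Σ q_i W_i = 1}`. -/
def closedSimplex {m : ℕ} (q : Fin m → ℝ) : Set (Fin m → ℝ) :=
  {W | (∀ i, 0 ≤ W i) ∧ ∑ i, q i * W i = 1}

/-- The open Arrow–Debreu wealth simplex `{W ∈ (0,∞)^m : Σ q_i W_i = 1}`. -/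
def openSimplex {m : ℕ} (q : Fin m → ℝ) : Set (Fin m → ℝ) :=
  {W | (∀ i, 0 < W i) ∧ ∑ i, q i * W i = 1}

/-- The finite set `C_n` of count vectors `k : Fin m → ℕ` with `Σ k_i = n`. -/
def countFinset (m n : ℕ) : Finset (Fin m → ℕ) :=
  (Fintype.piFinset fun _ : Fin m => Finset.range (n + 1)).filter fun k => ∑ i, k i = n

/-- The monomial `W^k := Π_i W_i^{k_i}` (with the convention `0^0 = 1`). -/
def mono {m : ℕ} (W : Fin m → ℝ) (k : Fin m → ℕ) : ℝ := ∏ i, W i ^ k i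

/-- The multinomial probability `π_k = (n!/(k_1!⋯k_m!))·Π p_i^{k_i}`. -/
def countProb {m : ℕ} (p : Fin m → ℝ) (k : Fin m → ℕ) : ℝ :=
  (Nat.multinomial Finset.univ k : ℝ) * ∏ i, p i ^ k i

/-- The upper α-quantile of terminal wealth
`Q_{n,α}(W) := sup{t ∈ [0,∞) : Σ_{k ∈ C_n : W^k ≥ t} π_k ≥ α}`. -/
def upperQuantile {m : ℕ} (p : Fin m → ℝ) (n : ℕ) (α : ℝ) (W : Fin m → ℝ) : ℝ :=
  sSup {t : ℝ | 0 ≤ t ∧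
    α ≤ ∑ k ∈ countFinset m n, if t ≤ mono W k then countProb p k else 0}

/-- The union of the count hyperplanes `H_{k,ℓ}`. -/
def hyperUnion (m n : ℕ) : Set (Fin m → ℝ) :=
  {u | ∃ k ∈ countFinset m n, ∃ l ∈ countFinset m n,
    k ≠ l ∧ ∑ i, ((k i : ℝ) - (l i : ℝ)) * u i = 0}

/-- A chamber is a connected component of the complement of the count arrangement. -/
def IsChamber (m n : ℕ) (Γ : Set (Fin m → ℝ)) : Prop :=
  ∃ u ∈ (hyperUnion m n)ᶜ, Γ = connectedComponentIn (hyperUnion m n)ᶜ u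

/-- `F_Γ := {W ∈ W⁺⁺ : log W ∈ Γ}`. -/
def chamberFace {m : ℕ} (q : Fin m → ℝ) (Γ : Set (Fin m → ℝ)) : Set (Fin m → ℝ) :=
  {W | W ∈ openSimplex q ∧ (fun i => Real.log (W i)) ∈ Γ}

/-- `k` is the quantile count vector `k_{α,Γ}` of the chamber `Γ`: the tail mass at `W^k`
is at least `α`, while the strict tail mass is below `α`, for every `W ∈ F_Γ`. -/
def IsQuantileVec {m : ℕ} (p q : Fin m → ℝ) (n : ℕ) (α : ℝ) (Γ : Set (Fin m → ℝ))
    (k : Fin m → ℕ) : Prop :=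
  k ∈ countFinset m n ∧
  ∀ W ∈ chamberFace q Γ,
    α ≤ (∑ l ∈ countFinset m n, if mono W k ≤ mono W l then countProb p l else 0) ∧
    (∑ l ∈ countFinset m n, if mono W k < mono W l then countProb p l else 0) < α

lemma digit_lemma {m n : ℕ} (hn : 1 ≤ n) (d : Fin m → ℤ) (hd : ∀ i, |d i| ≤ (n : ℤ))
    (h : ∑ i, d i * ((2 * n + 1 : ℕ) : ℤ) ^ (i : ℕ) = 0) : ∀ i, d i = 0 := by
  by_contra hne
  push_neg at hne
  obtain ⟨i0, hi0⟩ := hne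
  set B : ℤ := ((2 * n + 1 : ℕ) : ℤ) with hB
  have hB2 : 2 ≤ B := by
    have : (3 : ℤ) ≤ ((2 * n + 1 : ℕ) : ℤ) := by exact_mod_cast Nat.succ_le_succ (by omega)
    omega
  set s : Finset (Fin m) := univ.filter (fun i => d i ≠ 0) with hs
  have hsne : s.Nonempty := ⟨i0, by simp [hs, hi0]⟩
  set j := s.max' hsne with hj
  have hjs : j ∈ s := s.max'_mem hsne
  have hdj : d j ≠ 0 := by simpa [hs] using hjs
  have hBpos : (0:ℤ) < B := by omega
  have hsum : ∑ i ∈ s, d i * B ^ (i : ℕ) = 0 := by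
    rw [← h]
    exact Finset.sum_filter_of_ne (fun i _ hne h0 => hne (by simp [h0]))
  have hsplit : d j * B ^ (j : ℕ) + ∑ i ∈ s.erase j, d i * B ^ (i : ℕ) = 0 := by
    rw [← Finset.add_sum_erase s _ hjs] at hsum
    exact hsum
  set R := ∑ i ∈ s.erase j, d i * B ^ (i : ℕ) with hR
  have hlt : ∀ i ∈ s.erase j, (i : ℕ) < (j : ℕ) := by
    intro i hi
    have hine : i ≠ j := (Finset.mem_erase.mp hi).1
    have hle : i ≤ j := s.le_max' i (Finset.mem_erase.mp hi).2
    exact Fin.lt_iff_val_lt_val.mp (lt_of_le_of_ne hle hine)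
  have hpow_pos : (0:ℤ) < B ^ (j : ℕ) := pow_pos hBpos _
  have hRle : |R| ≤ (n : ℤ) * ∑ a ∈ Finset.range (j : ℕ), B ^ a := by
    calc |R| ≤ ∑ i ∈ s.erase j, |d i * B ^ (i : ℕ)| := Finset.abs_sum_le_sum_abs _ _
    _ = ∑ i ∈ s.erase j, |d i| * B ^ (i : ℕ) := by
        refine Finset.sum_congr rfl fun i _ => ?_
        rw [abs_mul, abs_of_nonneg (le_of_lt (pow_pos hBpos _))]
    _ ≤ ∑ i ∈ s.erase j, (n : ℤ) * B ^ (i : ℕ) := by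
        refine Finset.sum_le_sum fun i _ => ?_
        exact mul_le_mul_of_nonneg_right (hd i) (le_of_lt (pow_pos hBpos _))
    _ = (n : ℤ) * ∑ i ∈ s.erase j, B ^ (i : ℕ) := by rw [Finset.mul_sum]
    _ ≤ (n : ℤ) * ∑ a ∈ Finset.range (j : ℕ), B ^ a := by
        refine mul_le_mul_of_nonneg_left ?_ (by exact_mod_cast Nat.zero_le n)
        have himg : ∑ i ∈ s.erase j, B ^ (i : ℕ) = ∑ a ∈ (s.erase j).image (fun i : Fin m => (i : ℕ)), B ^ a := by
          rw [Finset.sum_image (fun a _ b _ hab => Fin.val_injective hab)]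
        rw [himg]
        refine Finset.sum_le_sum_of_subset_of_nonneg ?_ (fun a _ _ => le_of_lt (pow_pos hBpos _))
        intro a ha
        obtain ⟨i, hi, rfl⟩ := Finset.mem_image.mp ha
        exact Finset.mem_range.mpr (hlt i hi)
  have hgeom : (∑ a ∈ Finset.range (j : ℕ), B ^ a) * (B - 1) = B ^ (j : ℕ) - 1 := geom_sum_mul B _
  have hB1 : B - 1 = 2 * (n : ℤ) := by push_cast [hB]; ring
  have h2R : 2 * ((n:ℤ) * ∑ a ∈ Finset.range (j : ℕ), B ^ a) = B ^ (j : ℕ) - 1 := by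
    rw [← hgeom, hB1]; ring
  have hRabs : |R| = |d j| * B ^ (j : ℕ) := by
    have : R = -(d j * B ^ (j : ℕ)) := by linarith [hsplit]
    rw [this, abs_neg, abs_mul, abs_of_nonneg (le_of_lt hpow_pos)]
  have hdj1 : 1 ≤ |d j| := Int.one_le_abs hdj
  have : B ^ (j : ℕ) ≤ |R| := by
    rw [hRabs]
    nlinarith [hpow_pos]
  linarith [hRle, h2R, hpow_pos, this]

lemma key_ne (A S B : ℝ) (h : S ≠ 0 ∨ B ≠ 0) :
    ∀ᶠ ε in 𝓝[>] (0:ℝ), A + (S + B * ε) * Real.log ε ≠ 0 := by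
  have hlin : Filter.Tendsto (fun ε : ℝ => S + B * ε) (𝓝[>] (0:ℝ)) (𝓝 S) := by
    have : Filter.Tendsto (fun ε : ℝ => S + B * ε) (𝓝 (0:ℝ)) (𝓝 (S + B * 0)) :=
      (continuous_const.add (continuous_const.mul continuous_id)).tendsto 0
    simpa using this.mono_left nhdsWithin_le_nhds
  by_cases hS : S = 0
  · subst hS
    have hB : B ≠ 0 := h.resolve_left (by simp)
    by_cases hA : A = 0
    · subst hA
      filter_upwards [Ioo_mem_nhdsGT_of_mem (by norm_num : (0:ℝ) ∈ Set.Ico (0:ℝ) 1)] with ε hε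
      have hlog : Real.log ε < 0 := Real.log_neg hε.1 hε.2
      have : (0 + B * ε) * Real.log ε ≠ 0 := by
        simp only [zero_add]
        exact mul_ne_zero (mul_ne_zero hB (ne_of_gt hε.1)) (ne_of_lt hlog)
      simpa using this
    · have h0 : Filter.Tendsto (fun ε : ℝ => B * (Real.log ε * ε)) (𝓝[>] (0:ℝ)) (𝓝 (B * 0)) := by
        have := tendsto_log_mul_rpow_nhdsGT_zero (r := 1) one_pos
        simp only [Real.rpow_one] at this
        exact this.const_mul B
      rw [mul_zero] at h0
      have habs : Filter.Tendsto (fun ε : ℝ => |B * (Real.log ε * ε)|) (𝓝[>] (0:ℝ)) (𝓝 0) := by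
        simpa using h0.abs
      filter_upwards [habs.eventually (eventually_lt_nhds (by positivity : (0:ℝ) < |A|))] with ε hε
      intro hcon
      have heq : (0 + B * ε) * Real.log ε = B * (Real.log ε * ε) := by ring
      rw [heq] at hcon
      have : |B * (Real.log ε * ε)| = |A| := by
        have : B * (Real.log ε * ε) = -A := by linarith
        rw [this, abs_neg]
      linarith
  · have hlog : Filter.Tendsto (fun ε : ℝ => |Real.log ε|) (𝓝[>] (0:ℝ)) Filter.atTop :=
      tendsto_abs_atBot_atTop.comp Real.tendsto_log_nhdsGT_zero
    have hprod : Filter.Tendsto (fun ε : ℝ => |S + B * ε| * |Real.log ε|) (𝓝[>] (0:ℝ)) Filter.atTop :=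
      Filter.Tendsto.pos_mul_atTop (by positivity) hlin.abs hlog
    filter_upwards [hprod.eventually (Filter.eventually_gt_atTop |A|)] with ε hε
    intro hcon
    have habs : |(S + B * ε) * Real.log ε| = |A| := by
      have : (S + B * ε) * Real.log ε = -A := by linarith
      rw [this, abs_neg]
    rw [abs_mul] at habs
    linarith


/-- **Chamber covering.** Every point of the closed Arrow–Debreu simplex lies in the
closure of `F_Γ` for some admissible chamber `Γ`. -/
theorem chamber_covering (m n : ℕ) (hm : 2 ≤ m) (hn : 1 ≤ n)
    (p q : Fin m → ℝ) (hp : ∀ i, 0 < p i ∧ p i < 1) (hpsum : ∑ i, p i = 1)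
    (hq : ∀ i, 0 < q i) :
    ∀ W ∈ closedSimplex q, ∃ Γ : Set (Fin m → ℝ),
      IsChamber m n Γ ∧ (chamberFace q Γ).Nonempty ∧ W ∈ closure (chamberFace q Γ) := by
  intro W hW
  obtain ⟨hW0, hWsum⟩ := hW
  have hm0 : 0 < m := by omega
  haveI : Nonempty (Fin m) := Fin.pos_iff_nonempty.mp hm0
  -- exponents
  set T : Fin m → ℝ := fun i => ((2 * n + 1 : ℕ) : ℝ) ^ (i : ℕ) with hT
  have hTpos : ∀ i, 0 < T i := fun i => pow_pos (by positivity) _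
  -- the log-curve
  set u : ℝ → Fin m → ℝ := fun ε i =>
    if W i = 0 then T i * Real.log ε else Real.log (W i) + ε * (T i * Real.log ε) with hu
  set x : ℝ → Fin m → ℝ := fun ε i => Real.exp (u ε i) with hx
  set Sf : ℝ → ℝ := fun ε => ∑ i, q i * x ε i with hSf
  have hSpos : ∀ ε, 0 < Sf ε := fun ε =>
    Finset.sum_pos (fun i _ => mul_pos (hq i) (Real.exp_pos _)) Finset.univ_nonempty
  set γ : ℝ → Fin m → ℝ := fun ε i => x ε i / Sf ε with hγ
  set v : ℝ → Fin m → ℝ := fun ε i => u ε i - Real.log (Sf ε) with hv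
  have hlogγ : ∀ ε, (fun i => Real.log (γ ε i)) = v ε := by
    intro ε; funext i
    simp only [hγ, hv, hx]
    rw [Real.log_div (Real.exp_ne_zero _) (ne_of_gt (hSpos ε)), Real.log_exp]
  -- membership facts about count vectors
  have hCsum : ∀ k ∈ countFinset m n, ∑ i, k i = n := fun k hk => (Finset.mem_filter.mp hk).2
  have hCle : ∀ k ∈ countFinset m n, ∀ i, k i ≤ n := by
    intro k hk i
    have h1 := Finset.mem_range.mp (Fintype.mem_piFinset.mp (Finset.mem_filter.mp hk).1 i)
    omega
  -- genericity
  have hgen : ∀ k ∈ countFinset m n, ∀ l ∈ countFinset m n, k ≠ l →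
      (∑ i, if W i = 0 then ((k i:ℝ) - (l i:ℝ)) * T i else 0) ≠ 0 ∨
      (∑ i, if W i = 0 then 0 else ((k i:ℝ) - (l i:ℝ)) * T i) ≠ 0 := by
    intro k hk l hl hkl
    by_contra hcon
    push_neg at hcon
    obtain ⟨hZ0, hP0⟩ := hcon
    set dZ : Fin m → ℤ := fun i => if W i = 0 then (k i : ℤ) - (l i : ℤ) else 0 with hdZ
    set dP : Fin m → ℤ := fun i => if W i = 0 then 0 else (k i : ℤ) - (l i : ℤ) with hdP
    have hbd : ∀ i, |(k i : ℤ) - (l i : ℤ)| ≤ (n : ℤ) := by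
      intro i
      have h1 := hCle k hk i
      have h2 := hCle l hl i
      rw [abs_le]; constructor <;> omega
    have hdZbd : ∀ i, |dZ i| ≤ (n : ℤ) := by
      intro i; simp only [hdZ]; split
      · exact hbd i
      · simp
    have hdPbd : ∀ i, |dP i| ≤ (n : ℤ) := by
      intro i; simp only [hdP]; split
      · simp
      · exact hbd i
    have hcastZ : ((∑ i, dZ i * ((2 * n + 1 : ℕ) : ℤ) ^ (i : ℕ) : ℤ) : ℝ)
        = ∑ i, if W i = 0 then ((k i:ℝ) - (l i:ℝ)) * T i else 0 := by
      push_cast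
      refine Finset.sum_congr rfl fun i _ => ?_
      by_cases h : W i = 0 <;> simp [hdZ, h, hT] <;> push_cast <;> ring
    have hcastP : ((∑ i, dP i * ((2 * n + 1 : ℕ) : ℤ) ^ (i : ℕ) : ℤ) : ℝ)
        = ∑ i, if W i = 0 then 0 else ((k i:ℝ) - (l i:ℝ)) * T i := by
      push_cast
      refine Finset.sum_congr rfl fun i _ => ?_
      by_cases h : W i = 0 <;> simp [hdP, h, hT] <;> push_cast <;> ring
    have hZ := digit_lemma hn dZ hdZbd (by exact_mod_cast hcastZ.trans hZ0)
    have hP := digit_lemma hn dP hdPbd (by exact_mod_cast hcastP.trans hP0)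
    apply hkl
    funext i
    by_cases h : W i = 0
    · have := hZ i; simp only [hdZ, h, if_true] at this; omega
    · have := hP i; simp only [hdP, h, if_neg h] at this; omega
  -- the value of the hyperplane functional along the curve
  have hveq : ∀ (ε : ℝ), ∀ k ∈ countFinset m n, ∀ l ∈ countFinset m n,
      ∑ i, ((k i : ℝ) - (l i : ℝ)) * v ε i =
        (∑ i, if W i = 0 then 0 else ((k i:ℝ) - (l i:ℝ)) * Real.log (W i)) +
        ((∑ i, if W i = 0 then ((k i:ℝ) - (l i:ℝ)) * T i else 0) +
          (∑ i, if W i = 0 then 0 else ((k i:ℝ) - (l i:ℝ)) * T i) * ε) * Real.log ε := by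
    intro ε k hk l hl
    have hsum0 : ∑ i, ((k i : ℝ) - (l i : ℝ)) = 0 := by
      have h1 : ∑ i, (k i : ℝ) = (n : ℝ) := by exact_mod_cast hCsum k hk
      have h2 : ∑ i, (l i : ℝ) = (n : ℝ) := by exact_mod_cast hCsum l hl
      rw [Finset.sum_sub_distrib, h1, h2, sub_self]
    have hpt : ∀ i, ((k i:ℝ) - (l i:ℝ)) * u ε i =
        (if W i = 0 then 0 else ((k i:ℝ) - (l i:ℝ)) * Real.log (W i)) +
        ((if W i = 0 then ((k i:ℝ) - (l i:ℝ)) * T i else 0) * Real.log ε +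
         (if W i = 0 then 0 else ((k i:ℝ) - (l i:ℝ)) * T i) * (ε * Real.log ε)) := by
      intro i
      by_cases h : W i = 0 <;> simp only [hu, h, if_true, if_false, reduceIte] <;> ring
    have hexp : ∑ i, ((k i : ℝ) - (l i : ℝ)) * v ε i
        = ∑ i, ((k i:ℝ) - (l i:ℝ)) * u ε i := by
      simp only [hv]
      rw [Finset.sum_congr rfl fun i _ =>
        mul_sub ((k i:ℝ) - (l i:ℝ)) (u ε i) (Real.log (Sf ε)),
        Finset.sum_sub_distrib, ← Finset.sum_mul, hsum0, zero_mul, sub_zero]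
    rw [hexp]
    rw [Finset.sum_congr rfl fun i _ => hpt i]
    rw [Finset.sum_add_distrib, Finset.sum_add_distrib, ← Finset.sum_mul, ← Finset.sum_mul]
    ring
  -- eventual nonvanishing for all pairs
  have hEv : ∀ᶠ ε in 𝓝[>] (0:ℝ), ∀ k ∈ countFinset m n, ∀ l ∈ countFinset m n,
      k ≠ l → ∑ i, ((k i : ℝ) - (l i : ℝ)) * v ε i ≠ 0 := by
    rw [Filter.eventually_all_finset]
    intro k hk
    rw [Filter.eventually_all_finset]
    intro l hl
    by_cases hkl : k = l
    · exact Filter.Eventually.of_forall fun ε hne => absurd hkl hne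
    · have hne := key_ne
        (∑ i, if W i = 0 then 0 else ((k i:ℝ) - (l i:ℝ)) * Real.log (W i))
        (∑ i, if W i = 0 then ((k i:ℝ) - (l i:ℝ)) * T i else 0)
        (∑ i, if W i = 0 then 0 else ((k i:ℝ) - (l i:ℝ)) * T i)
        (hgen k hk l hl hkl)
      filter_upwards [hne] with ε hε _
      rw [hveq ε k hk l hl]
      exact hε
  obtain ⟨ε₀, hε₀pos, hε₀⟩ := (nhdsGT_basis (0:ℝ)).eventually_iff.mp hEv
  -- continuity of v on Ioo 0 ε₀
  have hlogcont : ContinuousOn Real.log (Set.Ioo (0:ℝ) ε₀) :=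
    Real.continuousOn_log.mono (fun y hy => by
      simp only [Set.mem_compl_iff, Set.mem_singleton_iff]
      exact ne_of_gt hy.1)
  have hucont : ∀ i, ContinuousOn (fun ε => u ε i) (Set.Ioo (0:ℝ) ε₀) := by
    intro i
    by_cases h : W i = 0
    · simp only [hu, h, if_true, reduceIte]
      exact continuousOn_const.mul hlogcont
    · simp only [hu, h, if_false, reduceIte]
      exact continuousOn_const.add (continuousOn_id.mul (continuousOn_const.mul hlogcont))
  have hScont : ContinuousOn Sf (Set.Ioo (0:ℝ) ε₀) := by
    simp only [hSf, hx]
    exact continuousOn_finset_sum _ fun i _ => continuousOn_const.mul ((hucont i).rexp)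
  have hvcont : ContinuousOn v (Set.Ioo (0:ℝ) ε₀) := by
    rw [continuousOn_pi]
    intro i
    exact (hucont i).sub (hScont.log (fun ε _ => ne_of_gt (hSpos ε)))
  set ε₁ : ℝ := ε₀ / 2 with hε₁
  have hε₁mem : ε₁ ∈ Set.Ioo (0:ℝ) ε₀ := ⟨by positivity, by simp only [hε₁]; linarith⟩
  have hvne : ∀ ε ∈ Set.Ioo (0:ℝ) ε₀, v ε ∈ (hyperUnion m n)ᶜ := by
    intro ε hε hmem
    obtain ⟨k, hk, l, hl, hkl, hzero⟩ := hmem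
    exact hε₀ hε k hk l hl hkl hzero
  set Γ : Set (Fin m → ℝ) := connectedComponentIn (hyperUnion m n)ᶜ (v ε₁) with hΓ
  have hK : v '' (Set.Ioo (0:ℝ) ε₀) ⊆ Γ := by
    refine IsPreconnected.subset_connectedComponentIn ?_ ⟨ε₁, hε₁mem, rfl⟩ ?_
    · exact isPreconnected_Ioo.image v hvcont
    · rintro _ ⟨ε, hε, rfl⟩; exact hvne ε hε
  have hface : ∀ ε ∈ Set.Ioo (0:ℝ) ε₀, γ ε ∈ chamberFace q Γ := by
    intro ε hε
    refine ⟨⟨fun i => div_pos (Real.exp_pos _) (hSpos ε), ?_⟩, ?_⟩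
    · have hdiv : ∑ i, q i * (x ε i / Sf ε) = (∑ i, q i * x ε i) / Sf ε := by
        rw [Finset.sum_div]
        exact Finset.sum_congr rfl fun i _ => (mul_div_assoc _ _ _).symm
      simp only [hγ]
      rw [hdiv]
      exact div_self (ne_of_gt (hSpos ε))
    · rw [hlogγ ε]
      exact hK ⟨ε, hε, rfl⟩
  -- convergence to W
  have hxt : ∀ i, Filter.Tendsto (fun ε => x ε i) (𝓝[>] (0:ℝ)) (𝓝 (W i)) := by
    intro i
    by_cases h : W i = 0
    · have h1 : Filter.Tendsto (fun ε : ℝ => T i * Real.log ε) (𝓝[>] (0:ℝ)) Filter.atBot :=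
        Filter.Tendsto.const_mul_atBot (hTpos i) Real.tendsto_log_nhdsGT_zero
      have h2 := Real.tendsto_exp_atBot.comp h1
      simpa [hx, hu, h] using h1
    · have hWpos : 0 < W i := lt_of_le_of_ne (hW0 i) (Ne.symm h)
      have h1 : Filter.Tendsto (fun ε : ℝ => ε * (T i * Real.log ε)) (𝓝[>] (0:ℝ)) (𝓝 0) := by
        have h2 := tendsto_log_mul_rpow_nhdsGT_zero (r := 1) one_pos
        simp only [Real.rpow_one] at h2
        have h3 := h2.const_mul (T i)
        rw [mul_zero] at h3
        refine h3.congr' (Filter.Eventually.of_forall fun ε => by ring)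
      have h2 : Filter.Tendsto (fun ε => u ε i) (𝓝[>] (0:ℝ)) (𝓝 (Real.log (W i))) := by
        simp only [hu, h, if_false, reduceIte]
        have h4 := Filter.Tendsto.add
          (tendsto_const_nhds : Filter.Tendsto (fun _ : ℝ => Real.log (W i))
            (𝓝[>] (0:ℝ)) (𝓝 (Real.log (W i)))) h1
        simpa using h4
      have h3 := (Real.continuous_exp.tendsto _).comp h2
      simp only [hx]
      rw [Real.exp_log hWpos] at h3
      exact h3
  have hSt : Filter.Tendsto Sf (𝓝[>] (0:ℝ)) (𝓝 1) := by
    have h1 : Filter.Tendsto Sf (𝓝[>] (0:ℝ)) (𝓝 (∑ i, q i * W i)) := by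
      simp only [hSf]
      exact tendsto_finset_sum _ fun i _ => tendsto_const_nhds.mul (hxt i)
    rwa [hWsum] at h1
  have hγt : Filter.Tendsto γ (𝓝[>] (0:ℝ)) (𝓝 W) := by
    rw [tendsto_pi_nhds]
    intro i
    have := (hxt i).div hSt one_ne_zero
    rw [div_one] at this
    exact this
  refine ⟨Γ, ⟨v ε₁, hvne ε₁ hε₁mem, rfl⟩, ⟨γ ε₁, hface ε₁ hε₁mem⟩, ?_⟩
  refine mem_closure_of_tendsto hγt ?_
  filter_upwards [Ioo_mem_nhdsGT_of_mem (Set.left_mem_Ico.mpr hε₀pos)] with ε hε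
  exact hface ε hε
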